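/- Let V be a finite-dimensional complex vector space, W ⊆ GL(V) a finite subgroup generated by pseudo-reflections, and φ ∈ GL(V) of finite order normalizing W; let δ be the smallest positive integer with φ^δ ∈ W. Let n, d be positive integers, k = gcd(n, d), σ ∈ GL(V^n) given by σ(x₁, …, xₙ) = (x₂, …, xₙ, φ(x₁)), and ζ_d = exp(2πi/d). Then: (1) there exists a positive integer m with m·(n/k) ≡ 1 (mod d/k) and gcd(m, δ) = 1; (2) for any such m, the ζ_d-rank of the coset W^n·σ (the maximum over g ∈ W^n·σ of dim ker(g − ζ_d·id)) equals the ζ_{d/k}-rank of the coset W·φ^m (the maximum over w ∈ W of dim ker(w∘φ^m − ζ_{d/k}·id)). -/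

import Mathlib

/-- A pseudo-reflection: an automorphism `≠ 1` whose fixed subspace is a hyperplane. -/
def IsPseudoReflection {K V : Type*} [Field K] [AddCommGroup V] [Module K V]
    (g : V ≃ₗ[K] V) : Prop :=
  g ≠ 1 ∧
    Module.finrank K (LinearMap.ker ((g : V →ₗ[K] V) - LinearMap.id)) + 1 =
      Module.finrank K V

/-- The `ζ`-rank of a set of automorphisms: the maximal dimension of a `ζ`-eigenspace of
an element of the set. -/
noncomputable def eigenRank {K V : Type*} [Field K] [AddCommGroup V] [Module K V]
    (S : Set (V ≃ₗ[K] V)) (ζ : K) : ℕ :=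
  sSup {k : ℕ | ∃ g ∈ S, k = Module.finrank K (Module.End.eigenspace (g : V →ₗ[K] V) ζ)}

/-- The twisted-shift automorphism `σ` of `Vⁿ`:
`σ (x₁, …, xₙ) = (x₂, …, xₙ, φ x₁)`. -/
noncomputable def twistShift {K V : Type*} [Field K] [AddCommGroup V] [Module K V]
    (n : ℕ) (φ : V ≃ₗ[K] V) : (Fin n → V) ≃ₗ[K] (Fin n → V) :=
  (LinearEquiv.piCongrRight
      (fun i : Fin n => if (i : ℕ) = 0 then φ else LinearEquiv.refl K V)).trans
    (LinearEquiv.funCongrLeft K V (finRotate n))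


set_option linter.unusedSectionVars false

section Aux

open Module

variable {V : Type*} [AddCommGroup V] [Module ℂ V] [FiniteDimensional ℂ V]


variable {V : Type*} [AddCommGroup V] [Module ℂ V] [FiniteDimensional ℂ V]

noncomputable def Qprod (w : ℕ → (V ≃ₗ[ℂ] V)) : ℕ → (V ≃ₗ[ℂ] V)
  | 0 => 1
  | (j+1) => (w j)⁻¹ * Qprod w j

noncomputable def wext (N : ℕ) (w : Fin (N+1) → (V ≃ₗ[ℂ] V)) : ℕ → (V ≃ₗ[ℂ] V) :=
  fun j => if h : j < N+1 then w ⟨j, h⟩ else 1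

lemma linEquiv_mul_apply (e f : V ≃ₗ[ℂ] V) (a : V) : (e * f) a = e (f a) := rfl

lemma linEquiv_inv_apply (e : V ≃ₗ[ℂ] V) (a : V) : e⁻¹ (e a) = a := by
  rw [show e⁻¹ (e a) = (e⁻¹ * e) a from rfl, inv_mul_cancel]; rfl

lemma linEquiv_inv_apply' (e : V ≃ₗ[ℂ] V) (a : V) : e (e⁻¹ a) = a := by
  rw [show e (e⁻¹ a) = (e * e⁻¹) a from rfl, mul_inv_cancel]; rfl

lemma eig_dim_shift (N : ℕ) (w : Fin (N+1) → (V ≃ₗ[ℂ] V)) (φ : V ≃ₗ[ℂ] V) (ζ : ℂ) :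
    finrank ℂ (Module.End.eigenspace
        ((LinearEquiv.piCongrRight w * twistShift (N+1) φ : (Fin (N+1) → V) ≃ₗ[ℂ] (Fin (N+1) → V)) :
          (Fin (N+1) → V) →ₗ[ℂ] (Fin (N+1) → V)) ζ)
      = finrank ℂ (Module.End.eigenspace
        ((((Qprod (wext N w) (N+1))⁻¹ * φ : V ≃ₗ[ℂ] V)) : V →ₗ[ℂ] V) (ζ ^ (N+1))) := by
  set Q := Qprod (wext N w) with hQ
  set g : (Fin (N+1) → V) ≃ₗ[ℂ] (Fin (N+1) → V) :=
    LinearEquiv.piCongrRight w * twistShift (N+1) φ with hgdef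
  set π : V ≃ₗ[ℂ] V := (Q (N+1))⁻¹ with hπ
  -- pointwise formula for g
  have hg : ∀ (x : Fin (N+1) → V) (i : Fin (N+1)),
      g x i = w i ((if ((i + 1 : Fin (N+1)) : ℕ) = 0 then φ else LinearEquiv.refl ℂ V)
        (x (i + 1))) := by
    intro x i
    simp [hgdef, linEquiv_mul_apply, twistShift, LinearEquiv.funCongrLeft_apply,
      LinearMap.funLeft, finRotate_succ_apply]
  have hwext : ∀ i : Fin (N+1), wext N w (i : ℕ) = w i := by
    intro i
    simp [wext, i.isLt]
  have hg_ne : ∀ (x : Fin (N+1) → V) (i : Fin (N+1)), i ≠ Fin.last N →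
      g x i = w i (x (i + 1)) := by
    intro x i hi
    rw [hg]
    rw [Fin.val_add_one, if_neg hi]
    simp
  have hg_last : ∀ (x : Fin (N+1) → V),
      g x (Fin.last N) = w (Fin.last N) (φ (x 0)) := by
    intro x
    rw [hg]
    rw [Fin.last_add_one]
    simp
  -- the linear maps
  set Φ : V →ₗ[ℂ] (Fin (N+1) → V) :=
    LinearMap.pi (fun i : Fin (N+1) => (ζ ^ (i : ℕ)) • (Q (i : ℕ)).toLinearMap) with hΦ
  have hΦap : ∀ (v : V) (i : Fin (N+1)), Φ v i = ζ ^ (i : ℕ) • Q (i : ℕ) v := by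
    intro v i; simp [hΦ]
  set E1 := Module.End.eigenspace (g : (Fin (N+1) → V) →ₗ[ℂ] (Fin (N+1) → V)) ζ with hE1
  set E2 := Module.End.eigenspace ((π * φ : V ≃ₗ[ℂ] V) : V →ₗ[ℂ] V) (ζ ^ (N+1)) with hE2
  have memE1 : ∀ x, x ∈ E1 ↔ g x = ζ • x := fun x => Module.End.mem_eigenspace_iff
  have memE2 : ∀ v, v ∈ E2 ↔ (π * φ) v = ζ ^ (N+1) • v := fun v => Module.End.mem_eigenspace_iff
  -- claim 1
  have claim1 : ∀ v ∈ E2, Φ v ∈ E1 := by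
    intro v hv
    rw [memE2] at hv
    have hv' : φ v = ζ ^ (N+1) • Q (N+1) v := by
      have := congrArg (Q (N+1)) hv
      rw [linEquiv_mul_apply, hπ, linEquiv_inv_apply', map_smul] at this
      exact this
    rw [memE1]
    funext i
    by_cases hi : i = Fin.last N
    · subst hi
      rw [hg_last]
      have h0 : Φ v 0 = v := by simp [hΦap, hQ, Qprod]
      rw [h0, hv']
      show w (Fin.last N) (ζ^(N+1) • ((wext N w N)⁻¹ * Q N) v) = ζ • Φ v (Fin.last N)
      rw [map_smul, linEquiv_mul_apply]
      have : wext N w N = w (Fin.last N) := by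
        have h := hwext (Fin.last N); rwa [Fin.val_last] at h
      rw [this, linEquiv_inv_apply', hΦap]
      rw [smul_smul, ← pow_succ', Fin.val_last]
    · rw [hg_ne _ _ hi, hΦap, Pi.smul_apply, hΦap]
      have hval : ((i + 1 : Fin (N+1)) : ℕ) = (i : ℕ) + 1 := by
        rw [Fin.val_add_one, if_neg hi]
      rw [hval]
      show w i (ζ^((i:ℕ)+1) • ((wext N w (i:ℕ))⁻¹ * Q (i:ℕ)) v) = ζ • ζ^(i:ℕ) • Q (i:ℕ) v
      rw [map_smul, linEquiv_mul_apply, hwext i, linEquiv_inv_apply']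
      rw [smul_smul, ← pow_succ']
  -- key recursion for members of E1
  have hrec : ∀ x ∈ E1, ∀ (j : ℕ) (hj : j < N+1), x ⟨j, hj⟩ = ζ ^ j • Q j (x 0) := by
    intro x hx
    rw [memE1] at hx
    intro j
    induction j with
    | zero => intro hj; simp [hQ, Qprod]
    | succ j ih =>
      intro hj
      have hjN : j < N + 1 := Nat.lt_of_succ_lt hj
      set i : Fin (N+1) := ⟨j, hjN⟩ with hi
      have hilast : i ≠ Fin.last N := by
        simp only [hi, Fin.ne_iff_vne, Fin.val_last]
        omega
      have hrel : w i (x (i + 1)) = ζ • x i := by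
        rw [← hg_ne _ _ hilast, hx]; rfl
      have hip : (i + 1 : Fin (N+1)) = ⟨j+1, hj⟩ := by
        apply Fin.ext
        rw [Fin.val_add_one, if_neg hilast]
      have : x (i+1) = (w i)⁻¹ (ζ • x i) := by
        rw [← hrel, linEquiv_inv_apply]
      rw [hip] at this
      rw [this, ih hjN, map_smul, map_smul]
      show ζ • ζ^j • (w i)⁻¹ (Q j (x 0)) = ζ^(j+1) • Qprod (wext N w) (j+1) (x 0)
      rw [Qprod, linEquiv_mul_apply]
      have : wext N w j = w i := by simp [wext, hjN, hi]
      rw [this, smul_smul, ← pow_succ']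
  -- claim 2
  have claim2 : ∀ x ∈ E1, x 0 ∈ E2 := by
    intro x hx
    have hlast : x (Fin.last N) = ζ ^ N • Q N (x 0) := by
      have := hrec x hx N (Nat.lt_succ_self N)
      rw [← this]; rfl
    have hx' := hx
    rw [memE1] at hx'
    have hrel : w (Fin.last N) (φ (x 0)) = ζ • x (Fin.last N) := by
      rw [← hg_last, hx']; rfl
    rw [memE2]
    rw [hlast] at hrel
    have : φ (x 0) = (w (Fin.last N))⁻¹ (ζ • ζ^N • Q N (x 0)) := by
      rw [← hrel, linEquiv_inv_apply]
    rw [linEquiv_mul_apply, this, hπ]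
    rw [map_smul, map_smul, map_smul, map_smul]
    show ζ • ζ^N • (Q (N+1))⁻¹ ((w (Fin.last N))⁻¹ (Q N (x 0))) = ζ^(N+1) • x 0
    have hQs : Q (N+1) = (w (Fin.last N))⁻¹ * Q N := by
      show Qprod (wext N w) (N+1) = _
      rw [Qprod]
      have h := hwext (Fin.last N); rw [Fin.val_last] at h
      rw [h]
    have : (Q (N+1))⁻¹ ((w (Fin.last N))⁻¹ (Q N (x 0))) = x 0 := by
      rw [hQs]
      have : ((w (Fin.last N))⁻¹ * Q N) (x 0) = (w (Fin.last N))⁻¹ (Q N (x 0)) := rfl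
      rw [← this, linEquiv_inv_apply]
    rw [this, smul_smul, ← pow_succ']
  -- claim 3
  have claim3 : ∀ v : V, Φ v 0 = v := by
    intro v; simp [hΦap, hQ, Qprod]
  -- claim 4
  have claim4 : ∀ x ∈ E1, Φ (x 0) = x := by
    intro x hx
    funext i
    rw [hΦap, ← hrec x hx (i : ℕ) i.isLt]
  -- build the equiv
  let F : E2 →ₗ[ℂ] E1 := LinearMap.codRestrict E1 (Φ.comp E2.subtype) (fun v => claim1 v v.2)
  let G : E1 →ₗ[ℂ] E2 := LinearMap.codRestrict E2 ((LinearMap.proj 0).comp E1.subtype)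
    (fun x => claim2 x x.2)
  have hFG : F.comp G = LinearMap.id := by
    refine LinearMap.ext fun x => Subtype.ext ?_
    show Φ ((x : Fin (N+1) → V) 0) = (x : Fin (N+1) → V)
    exact claim4 x x.2
  have hGF : G.comp F = LinearMap.id := by
    refine LinearMap.ext fun v => Subtype.ext ?_
    show Φ (v : V) 0 = (v : V)
    exact claim3 v
  exact (LinearEquiv.ofLinear F G hFG hGF).finrank_eq.symm


lemma eig_pow_le (e : V ≃ₗ[ℂ] V) (μ : ℂ) (b : ℕ) :
    Module.End.eigenspace (e : V →ₗ[ℂ] V) μ ≤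
      Module.End.eigenspace ((e ^ b : V ≃ₗ[ℂ] V) : V →ₗ[ℂ] V) (μ ^ b) := by
  intro x hx
  rw [Module.End.mem_eigenspace_iff] at hx ⊢
  have hx' : e x = μ • x := hx
  have key : ∀ b : ℕ, (e ^ b) x = μ ^ b • x := by
    intro b
    induction b with
    | zero => rw [pow_zero, pow_zero, one_smul]; rfl
    | succ b ih =>
      rw [pow_succ, pow_succ, linEquiv_mul_apply, hx', map_smul, ih, smul_smul, mul_comm]
  exact key b

lemma Qprod_mem (W : Subgroup (V ≃ₗ[ℂ] V)) (N : ℕ) (w : Fin (N+1) → (V ≃ₗ[ℂ] V))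
    (hw : ∀ i, w i ∈ W) : ∀ j, Qprod (wext N w) j ∈ W := by
  intro j
  induction j with
  | zero => exact one_mem W
  | succ j ih =>
    rw [Qprod]
    refine mul_mem (inv_mem ?_) ih
    unfold wext
    split
    · exact hw _
    · exact one_mem W

lemma Qprod_special (N : ℕ) (u : V ≃ₗ[ℂ] V) :
    ∀ j, Qprod (wext N (fun i : Fin (N+1) => if i = 0 then u else 1)) (j+1) = u⁻¹ := by
  intro j
  induction j with
  | zero =>
    rw [Qprod, Qprod]
    have h0 : wext N (fun i : Fin (N+1) => if i = 0 then u else 1) 0 = u := by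
      unfold wext
      rw [dif_pos (Nat.succ_pos N)]
      simp
    rw [h0, mul_one]
  | succ j ih =>
    rw [Qprod, ih]
    have h1 : wext N (fun i : Fin (N+1) => if i = 0 then u else 1) (j+1) = 1 := by
      unfold wext
      split
      · simp [Fin.ext_iff]
      · rfl
    rw [h1, inv_one, one_mul]

end Aux



lemma exists_inverse_pos {a c : ℕ} (h : Nat.Coprime a c) :
    ∃ b : ℕ, 0 < b ∧ a * b ≡ 1 [MOD c] := by
  rcases Nat.eq_zero_or_pos c with rfl | hc
  · exact ⟨1, one_pos, by simpa [Nat.Coprime] using h⟩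
  · haveI : NeZero c := ⟨hc.ne'⟩
    set u := ZMod.unitOfCoprime a h
    refine ⟨((u⁻¹ : (ZMod c)ˣ) : ZMod c).val + c, by positivity, ?_⟩
    have : ((a * (((u⁻¹ : (ZMod c)ˣ) : ZMod c).val + c) : ℕ) : ZMod c) = ((1 : ℕ) : ZMod c) := by
      push_cast
      rw [ZMod.natCast_val, ZMod.cast_id, ZMod.natCast_self]
      have hu : (a : ZMod c) = (u : ZMod c) := (ZMod.coe_unitOfCoprime a h).symm
      rw [hu]
      simp [mul_comm]
    exact (ZMod.natCast_eq_natCast_iff _ _ _).mp this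

lemma pow_modEq {z : ℂ} {c a b : ℕ} (hz : z ^ c = 1) (h : a ≡ b [MOD c]) :
    z ^ a = z ^ b := by
  have key : ∀ e : ℕ, z ^ e = z ^ (e % c) := by
    intro e
    conv_lhs => rw [← Nat.div_add_mod e c]
    rw [pow_add, pow_mul, hz, one_pow, one_mul]
  rw [key a, key b, h]

lemma exists_coprime_modEq (m₀ d' δ : ℕ) (h1 : Nat.Coprime m₀ d') (hm₀ : 0 < m₀)
    (hδ : 0 < δ) :
    ∃ m : ℕ, 0 < m ∧ m ≡ m₀ [MOD d'] ∧ Nat.Coprime m δ := by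
  set P : ℕ := ∏ p ∈ δ.primeFactors.filter (fun p => ¬ p ∣ m₀), p with hP
  refine ⟨m₀ + d' * P, by positivity, by simp [Nat.ModEq, Nat.add_mul_mod_self_left], ?_⟩
  rw [Nat.Coprime]
  by_contra hg
  obtain ⟨p, hp, hpd⟩ := Nat.exists_prime_and_dvd hg
  have hpm : p ∣ m₀ + d' * P := hpd.trans (Nat.gcd_dvd_left _ _)
  have hpδ : p ∣ δ := hpd.trans (Nat.gcd_dvd_right _ _)
  by_cases hpm₀ : p ∣ m₀
  · have hpdP : p ∣ d' * P := by
      have := Nat.dvd_sub hpm hpm₀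
      simpa using this
    rcases (Nat.Prime.dvd_mul hp).mp hpdP with hpd' | hpP
    · have : p ∣ Nat.gcd m₀ d' := Nat.dvd_gcd hpm₀ hpd'
      rw [h1] at this
      exact hp.one_lt.ne' (Nat.dvd_one.mp this)
    · obtain ⟨q, hq, hpq⟩ := (hp.prime.dvd_finset_prod_iff id).mp hpP
      simp only [Finset.mem_filter, Nat.mem_primeFactors] at hq
      have : p = q := ((Nat.prime_dvd_prime_iff_eq hp hq.1.1).mp hpq)
      exact hq.2 (this ▸ hpm₀)
  · have hpP : p ∣ P := by
      apply Finset.dvd_prod_of_mem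
      simp [Nat.mem_primeFactors, hp, hpδ, hδ.ne', hpm₀]
    have : p ∣ m₀ := by
      have := Nat.dvd_sub hpm (Dvd.dvd.mul_left hpP d')
      simpa using this
    exact hpm₀ this


lemma conj_pow_mem {G : Type*} [Group G] {W : Subgroup G} {φ : G}
    (h : ∀ u ∈ W, φ * u * φ⁻¹ ∈ W) (j : ℕ) {u : G} (hu : u ∈ W) :
    φ ^ j * u * (φ ^ j)⁻¹ ∈ W := by
  induction j with
  | zero => simpa using hu
  | succ j ih =>
    have : φ ^ (j+1) * u * (φ ^ (j+1))⁻¹ = φ * (φ ^ j * u * (φ ^ j)⁻¹) * φ⁻¹ := by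
      group
    rw [this]
    exact h _ ih

lemma coset_pow {G : Type*} [Group G] {W : Subgroup G} {φ : G}
    (h : ∀ u ∈ W, φ * u * φ⁻¹ ∈ W) (a : ℕ) {u : G} (hu : u ∈ W) (b : ℕ) :
    ∃ u' ∈ W, (u * φ ^ a) ^ b = u' * φ ^ (a * b) := by
  induction b with
  | zero => exact ⟨1, one_mem W, by simp⟩
  | succ b ih =>
    obtain ⟨u', hu', heq⟩ := ih
    refine ⟨u' * (φ ^ (a*b) * u * (φ ^ (a*b))⁻¹), mul_mem hu' (conj_pow_mem h _ hu), ?_⟩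
    rw [pow_succ, heq]
    rw [mul_add a b 1] -- a*(b+1)=a*b+a*1
    group

open Complex in
/-- Restriction of scalars for complex reflection cosets, distinguished roots of unity:
with `k = gcd(n, d)`, there exists `m` with `m·(n/k) ≡ 1 (mod d/k)` and `gcd(m, δ) = 1`,
and for any such `m` the `ζ_d`-rank of `Wⁿ·σ` equals the `ζ_{d/k}`-rank of `W·φᵐ`. -/
theorem restriction_of_scalars_rank_zeta_d
    {V : Type*} [AddCommGroup V] [Module ℂ V] [FiniteDimensional ℂ V]
    (W : Subgroup (V ≃ₗ[ℂ] V)) (hWfin : (W : Set (V ≃ₗ[ℂ] V)).Finite)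
    (hWrefl : Subgroup.closure {g : V ≃ₗ[ℂ] V | g ∈ W ∧ IsPseudoReflection g} = W)
    (φ : V ≃ₗ[ℂ] V) (hφord : IsOfFinOrder φ)
    (hφnorm : ∀ u ∈ W, φ * u * φ⁻¹ ∈ W)
    (δ : ℕ) (hδ : IsLeast {i : ℕ | 0 < i ∧ φ ^ i ∈ W} δ)
    (n d : ℕ) (hn : 0 < n) (hd : 0 < d) :
    (∃ m : ℕ, 0 < m ∧ m * (n / Nat.gcd n d) ≡ 1 [MOD d / Nat.gcd n d] ∧
      Nat.Coprime m δ) ∧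
    ∀ m : ℕ, 0 < m → m * (n / Nat.gcd n d) ≡ 1 [MOD d / Nat.gcd n d] →
      Nat.Coprime m δ →
      eigenRank {g : (Fin n → V) ≃ₗ[ℂ] (Fin n → V) |
          ∃ w : Fin n → (V ≃ₗ[ℂ] V), (∀ i, w i ∈ W) ∧
            g = LinearEquiv.piCongrRight w * twistShift n φ}
        (Complex.exp (2 * Real.pi * Complex.I / d)) =
      eigenRank {h : V ≃ₗ[ℂ] V | ∃ u ∈ W, h = u * φ ^ m}
        (Complex.exp (2 * Real.pi * Complex.I / (d / Nat.gcd n d : ℕ))) := by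
  classical
  obtain ⟨⟨hδpos, hφδW⟩, _hmin⟩ := hδ
  obtain ⟨N, rfl⟩ : ∃ N, n = N + 1 := ⟨n - 1, by omega⟩
  set n : ℕ := N + 1 with hnN
  set k := Nat.gcd n d with hkdef
  have hk : 0 < k := Nat.gcd_pos_of_pos_left _ hn
  set n' := n / k with hn'def
  set d' := d / k with hd'def
  have hcop : Nat.Coprime n' d' := Nat.coprime_div_gcd_div_gcd hk
  have hd'pos : 0 < d' := Nat.div_pos (Nat.gcd_le_right _ hd) hk
  have hn'pos : 0 < n' := Nat.div_pos (Nat.gcd_le_left _ hn) hk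
  have hkn : n' * k = n := Nat.div_mul_cancel (Nat.gcd_dvd_left n d)
  have hkd : d' * k = d := Nat.div_mul_cancel (Nat.gcd_dvd_right n d)
  constructor
  · -- part 1: existence
    obtain ⟨m₀, hm₀pos, hm₀⟩ := exists_inverse_pos hcop
    have hm₀d' : Nat.Coprime m₀ d' := by
      have hge : 1 ≤ n' * m₀ := Nat.mul_pos hn'pos hm₀pos
      have h1 : d' ∣ n' * m₀ - 1 := (Nat.modEq_iff_dvd' hge).mp hm₀.symm
      have h2 : Nat.gcd m₀ d' ∣ n' * m₀ := Dvd.dvd.mul_left (Nat.gcd_dvd_left _ _) n'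
      have h3 : Nat.gcd m₀ d' ∣ n' * m₀ - 1 := (Nat.gcd_dvd_right m₀ d').trans h1
      have h4 : Nat.gcd m₀ d' ∣ n' * m₀ - (n' * m₀ - 1) := Nat.dvd_sub h2 h3
      have h5 : n' * m₀ - (n' * m₀ - 1) = 1 := by omega
      rw [h5] at h4
      exact Nat.dvd_one.mp h4
    obtain ⟨m, hmpos, hmmod, hmcop⟩ := exists_coprime_modEq m₀ d' δ hm₀d' hm₀pos hδpos
    refine ⟨m, hmpos, ?_, hmcop⟩
    calc m * n' ≡ m₀ * n' [MOD d'] := hmmod.mul_right n'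
      _ = n' * m₀ := mul_comm _ _
      _ ≡ 1 [MOD d'] := hm₀
  · -- part 2
    intro m hmpos hmmod hmcop
    unfold eigenRank
    have hd0 : (d : ℂ) ≠ 0 := Nat.cast_ne_zero.mpr hd.ne'
    have hd'0 : (d' : ℂ) ≠ 0 := Nat.cast_ne_zero.mpr hd'pos.ne'
    set ζ : ℂ := Complex.exp (2 * Real.pi * Complex.I / d) with hζdef
    set ζ' : ℂ := Complex.exp (2 * Real.pi * Complex.I / (d' : ℕ)) with hζ'def
    have hζ'd' : ζ' ^ d' = 1 := by
      rw [hζ'def, ← Complex.exp_nat_mul]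
      have : (d' : ℂ) * (2 * Real.pi * Complex.I / (d' : ℕ)) = 2 * Real.pi * Complex.I := by
        field_simp
      rw [this, Complex.exp_two_pi_mul_I]
    have hζn : ζ ^ n = ζ' ^ n' := by
      rw [hζdef, hζ'def, ← Complex.exp_nat_mul, ← Complex.exp_nat_mul]
      congr 1
      have hcn : ((n : ℕ) : ℂ) = (n' : ℂ) * (k : ℂ) := by
        rw [← hkn]; push_cast; ring
      have hcd : ((d : ℕ) : ℂ) = (d' : ℂ) * (k : ℂ) := by
        rw [← hkd]; push_cast; ring
      rw [hcn, hcd]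
      have hk0 : (k : ℂ) ≠ 0 := Nat.cast_ne_zero.mpr hk.ne'
      field_simp
    -- coprimality of m with d'
    have hmd' : Nat.Coprime m d' := by
      have hge : 1 ≤ m * n' := Nat.mul_pos hmpos hn'pos
      have h1 : d' ∣ m * n' - 1 := (Nat.modEq_iff_dvd' hge).mp hmmod.symm
      have h2 : Nat.gcd m d' ∣ m * n' := Dvd.dvd.mul_right (Nat.gcd_dvd_left _ _) n'
      have h3 : Nat.gcd m d' ∣ m * n' - 1 := (Nat.gcd_dvd_right m d').trans h1
      have h4 : Nat.gcd m d' ∣ m * n' - (m * n' - 1) := Nat.dvd_sub h2 h3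
      have h5 : m * n' - (m * n' - 1) = 1 := by omega
      rw [h5] at h4
      exact Nat.dvd_one.mp h4
    -- the inverse m''
    obtain ⟨m'', hm''pos, hm''⟩ := exists_inverse_pos (Nat.Coprime.mul_right hmcop hmd')
    have hmodδ : m * m'' ≡ 1 [MOD δ] := hm''.of_dvd (dvd_mul_right δ d')
    have hmodd' : m * m'' ≡ 1 [MOD d'] := hm''.of_dvd (dvd_mul_left d' δ)
    have hm''n' : m'' ≡ n' [MOD d'] := by
      have hu : IsUnit ((m : ZMod d')) := by
        have := (ZMod.unitOfCoprime m hmd').isUnit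
        rwa [ZMod.coe_unitOfCoprime] at this
      have e1 : ((m : ZMod d')) * (m'' : ZMod d') = ((m : ZMod d')) * (n' : ZMod d') := by
        have c1 : ((m * m'' : ℕ) : ZMod d') = ((1 : ℕ) : ZMod d') :=
          (ZMod.natCast_eq_natCast_iff _ _ _).mpr hmodd'
        have c2 : ((m * n' : ℕ) : ZMod d') = ((1 : ℕ) : ZMod d') :=
          (ZMod.natCast_eq_natCast_iff _ _ _).mpr hmmod
        push_cast at c1 c2
        rw [c1, c2]
      exact (ZMod.natCast_eq_natCast_iff _ _ _).mp (hu.mul_left_cancel e1)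
    -- the set transformation for the product side
    have hAeq : {a : ℕ | ∃ g ∈ {g : (Fin n → V) ≃ₗ[ℂ] (Fin n → V) |
          ∃ w : Fin n → (V ≃ₗ[ℂ] V), (∀ i, w i ∈ W) ∧
            g = LinearEquiv.piCongrRight w * twistShift n φ},
          a = Module.finrank ℂ (Module.End.eigenspace (g : (Fin n → V) →ₗ[ℂ] (Fin n → V)) ζ)}
        = {a : ℕ | ∃ u ∈ W,
            a = Module.finrank ℂ (Module.End.eigenspace
              ((u * φ : V ≃ₗ[ℂ] V) : V →ₗ[ℂ] V) (ζ' ^ n'))} := by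
      ext a
      constructor
      · rintro ⟨g, ⟨w, hw, rfl⟩, rfl⟩
        refine ⟨(Qprod (wext N w) (N+1))⁻¹, inv_mem (Qprod_mem W N w hw (N+1)), ?_⟩
        rw [eig_dim_shift N w φ ζ]
        rw [show ζ ^ (N + 1) = ζ' ^ n' from hζn]
      · rintro ⟨u, hu, rfl⟩
        refine ⟨LinearEquiv.piCongrRight (fun i : Fin (N+1) => if i = 0 then u else 1) *
          twistShift (N+1) φ,
          ⟨fun i : Fin (N+1) => if i = 0 then u else 1,
            fun i => by dsimp only; split <;> [exact hu; exact one_mem W], rfl⟩, ?_⟩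
        rw [eig_dim_shift N _ φ ζ, Qprod_special N u (N), inv_inv]
        rw [show ζ ^ (N + 1) = ζ' ^ n' from hζn]
    rw [hAeq]
    -- now compare the two cosets of V
    have bddB : BddAbove {a : ℕ | ∃ h ∈ {h : V ≃ₗ[ℂ] V | ∃ u ∈ W, h = u * φ ^ m},
        a = Module.finrank ℂ (Module.End.eigenspace (h : V →ₗ[ℂ] V) ζ')} := by
      refine ⟨Module.finrank ℂ V, ?_⟩
      rintro a ⟨h, _, rfl⟩
      exact Submodule.finrank_le _
    have bddA : BddAbove {a : ℕ | ∃ u ∈ W,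
        a = Module.finrank ℂ (Module.End.eigenspace
          ((u * φ : V ≃ₗ[ℂ] V) : V →ₗ[ℂ] V) (ζ' ^ n'))} := by
      refine ⟨Module.finrank ℂ V, ?_⟩
      rintro a ⟨u, _, rfl⟩
      exact Submodule.finrank_le _
    have hAne : {a : ℕ | ∃ u ∈ W,
        a = Module.finrank ℂ (Module.End.eigenspace
          ((u * φ : V ≃ₗ[ℂ] V) : V →ₗ[ℂ] V) (ζ' ^ n'))}.Nonempty :=
      ⟨_, 1, one_mem W, rfl⟩
    have hBne : {a : ℕ | ∃ h ∈ {h : V ≃ₗ[ℂ] V | ∃ u ∈ W, h = u * φ ^ m},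
        a = Module.finrank ℂ (Module.End.eigenspace (h : V →ₗ[ℂ] V) ζ')}.Nonempty :=
      ⟨_, 1 * φ ^ m, ⟨1, one_mem W, rfl⟩, rfl⟩
    apply le_antisymm
    · apply csSup_le hAne
      rintro a ⟨u, hu, rfl⟩
      obtain ⟨u', hu', hpow⟩ := coset_pow hφnorm 1 hu m
      rw [pow_one, one_mul] at hpow
      have hle : Module.finrank ℂ (Module.End.eigenspace
            ((u * φ : V ≃ₗ[ℂ] V) : V →ₗ[ℂ] V) (ζ' ^ n'))
          ≤ Module.finrank ℂ (Module.End.eigenspace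
            (((u * φ) ^ m : V ≃ₗ[ℂ] V) : V →ₗ[ℂ] V) ((ζ' ^ n') ^ m)) :=
        Submodule.finrank_mono (eig_pow_le (u * φ) (ζ' ^ n') m)
      have hval : (ζ' ^ n') ^ m = ζ' := by
        rw [← pow_mul]
        conv_rhs => rw [← pow_one ζ']
        have harg : n' * m ≡ 1 [MOD d'] := mul_comm m n' ▸ hmmod
        exact pow_modEq hζ'd' harg
      rw [hpow, hval] at hle
      exact hle.trans (le_csSup bddB ⟨u' * φ ^ m, ⟨u', hu', rfl⟩, rfl⟩)
    · apply csSup_le hBne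
      rintro a ⟨h, ⟨u, hu, rfl⟩, rfl⟩
      obtain ⟨u', hu', hpow⟩ := coset_pow hφnorm m hu m''
      have hδdvd : δ ∣ m * m'' - 1 :=
        (Nat.modEq_iff_dvd' (Nat.mul_pos hmpos hm''pos)).mp hmodδ.symm
      obtain ⟨t, ht⟩ := hδdvd
      have hmm : m * m'' = δ * t + 1 := by
        have : 1 ≤ m * m'' := Nat.mul_pos hmpos hm''pos
        omega
      have hφsplit : φ ^ (m * m'') = (φ ^ δ) ^ t * φ := by
        rw [hmm, pow_add, pow_one, pow_mul]
      have hpow2 : (u * φ ^ m) ^ m'' = (u' * (φ ^ δ) ^ t) * φ := by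
        rw [hpow, hφsplit, mul_assoc]
      have hmem2 : u' * (φ ^ δ) ^ t ∈ W := mul_mem hu' (pow_mem hφδW t)
      have hle : Module.finrank ℂ (Module.End.eigenspace
            ((u * φ ^ m : V ≃ₗ[ℂ] V) : V →ₗ[ℂ] V) ζ')
          ≤ Module.finrank ℂ (Module.End.eigenspace
            (((u * φ ^ m) ^ m'' : V ≃ₗ[ℂ] V) : V →ₗ[ℂ] V) (ζ' ^ m'')) :=
        Submodule.finrank_mono (eig_pow_le (u * φ ^ m) ζ' m'')
      have hval : ζ' ^ m'' = ζ' ^ n' := pow_modEq hζ'd' hm''n'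
      rw [hpow2, hval] at hle
      exact hle.trans (le_csSup bddA ⟨u' * (φ ^ δ) ^ t, hmem2, rfl⟩)
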